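/- arXiv:2301.05992 — 4 statements merged into one kernel-verified Lean document; each statement's English description precedes it below -/
import Mathlib

section
/- Let x ~ N(0, I_n) be a standard Gaussian vector in R^n, and let Q be an (n+1)×(n+1) real symmetric positive semidefinite matrix with block structure Q = [[q11, q12^T], [q12, Q22]] where q11 is a scalar, q12 ∈ R^n, and Q22 is n×n. Then for any λ > 0, E[exp(-λ · (1,x)^T Q (1,x))] ≤ det(I_n + 2λ Q22)^{-1/2}. -/
open Matrix MeasureTheory ProbabilityTheory
open Real
open scoped ENNReal NNReal

lemma lintegral_pi_prod : ∀ (n : ℕ) (μ : Fin n → Measure ℝ), (∀ i, SigmaFinite (μ i)) →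
    ∀ (f : Fin n → ℝ → ℝ≥0∞), (∀ i, Measurable (f i)) →
    ∫⁻ x : Fin n → ℝ, ∏ i, f i (x i) ∂Measure.pi μ = ∏ i, ∫⁻ t, f i t ∂μ i := by
  intro n
  induction n with
  | zero =>
    intro μ _ f hf
    simp [Measure.pi_of_empty]
  | succ n ih =>
    intro μ hσ f hf
    have := fun i => hσ i
    have hmp := measurePreserving_piFinSuccAbove μ 0
    have key : ∫⁻ x : Fin (n+1) → ℝ, ∏ i, f i (x i) ∂Measure.pi μ
        = ∫⁻ p : ℝ × (Fin n → ℝ), f 0 p.1 * ∏ j, f (Fin.succ j) (p.2 j)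
            ∂((μ 0).prod (Measure.pi fun j => μ ((0 : Fin (n+1)).succAbove j))) := by
      rw [← hmp.lintegral_comp]
      · congr 1
        ext x
        rw [Fin.prod_univ_succ]
        simp [MeasurableEquiv.piFinSuccAbove, Fin.succAbove_zero, Fin.tail]
      · exact ((hf 0).comp measurable_fst).mul
          (Finset.measurable_prod _ fun j _ => (hf _).comp ((measurable_pi_apply j).comp measurable_snd))
    rw [key, lintegral_prod_mul (f := fun t => f 0 t)
      (g := fun y : Fin n → ℝ => ∏ j, f (Fin.succ j) (y j)) ((hf 0).aemeasurable)
      ((Finset.measurable_prod _ fun j _ => (hf _).comp (measurable_pi_apply j)).aemeasurable),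
      ih _ (fun j => hσ _) _ (fun j => hf _), Fin.prod_univ_succ]
    simp [Fin.succAbove_zero]

lemma measurable_gaussianPDF' : Measurable (gaussianPDF 0 1) :=
  (measurable_gaussianPDFReal 0 1).ennreal_ofReal

lemma pi_gaussian_eq (n : ℕ) :
    (Measure.pi fun _ : Fin n => gaussianReal 0 1) =
      volume.withDensity fun x : Fin n → ℝ => ∏ i, gaussianPDF 0 1 (x i) := by
  refine Measure.pi_eq fun s hs => ?_
  rw [withDensity_apply' _ (Set.pi Set.univ s)]
  have h1 : ∫⁻ x in Set.pi Set.univ s, ∏ i, gaussianPDF 0 1 (x i) ∂volume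
      = ∫⁻ x : Fin n → ℝ, ∏ i, Set.indicator (s i) (gaussianPDF 0 1) (x i) ∂volume := by
    rw [← lintegral_indicator (MeasurableSet.univ_pi hs)]
    congr 1
    ext x
    by_cases hx : x ∈ Set.pi Set.univ s
    · rw [Set.indicator_of_mem hx]
      exact (Finset.prod_congr rfl fun i _ =>
        (Set.indicator_of_mem (hx i (Set.mem_univ i)) _).symm)
    · rw [Set.indicator_of_notMem hx]
      simp only [Set.mem_pi, Set.mem_univ, forall_true_left, not_forall] at hx
      obtain ⟨i, hi⟩ := hx
      exact (Finset.prod_eq_zero (Finset.mem_univ i)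
        (Set.indicator_of_notMem hi _)).symm
  rw [h1, volume_pi, lintegral_pi_prod n _ (fun _ => inferInstance) _
    (fun i => measurable_gaussianPDF'.indicator (hs i))]
  refine Finset.prod_congr rfl fun i _ => ?_
  rw [lintegral_indicator (hs i), ← gaussianReal_apply 0 one_ne_zero]

lemma integral_pi_gaussian (n : ℕ) (g : (Fin n → ℝ) → ℝ) :
    ∫ x, g x ∂(Measure.pi fun _ : Fin n => gaussianReal 0 1)
      = ∫ x, (∏ i, gaussianPDFReal 0 1 (x i)) * g x ∂volume := by
  rw [pi_gaussian_eq]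
  have hfm : Measurable fun x : Fin n → ℝ => ∏ i, (gaussianPDFReal 0 1 (x i)).toNNReal :=
    Finset.measurable_prod _ fun i _ =>
      ((measurable_gaussianPDFReal 0 1).comp (measurable_pi_apply i)).real_toNNReal
  have hd : (fun x : Fin n → ℝ => ∏ i, gaussianPDF 0 1 (x i))
      = fun x : Fin n → ℝ => ((∏ i, (gaussianPDFReal 0 1 (x i)).toNNReal : ℝ≥0) : ℝ≥0∞) := by
    funext x
    rw [ENNReal.coe_finset_prod]
    exact Finset.prod_congr rfl fun i _ => rfl
  rw [hd, integral_withDensity_eq_integral_smul hfm]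
  refine integral_congr_ae (Filter.Eventually.of_forall fun x => ?_)
  simp only [NNReal.smul_def, NNReal.coe_prod]
  congr 1
  exact Finset.prod_congr rfl fun i _ => Real.coe_toNNReal _ (gaussianPDFReal_nonneg 0 1 _)

lemma dot_symm {k : ℕ} {M : Matrix (Fin k) (Fin k) ℝ} (h : Mᵀ = M) (x y : Fin k → ℝ) :
    x ⬝ᵥ M *ᵥ y = y ⬝ᵥ M *ᵥ x := by
  rw [dotProduct_mulVec x M y, ← mulVec_transpose, h, dotProduct_comm]

lemma cons_quad {n : ℕ} (Q : Matrix (Fin (n+1)) (Fin (n+1)) ℝ) (hsym : Qᵀ = Q)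
    (x : Fin n → ℝ) :
    Fin.cons 1 x ⬝ᵥ Q *ᵥ Fin.cons 1 x
      = Q 0 0 + 2 * ((fun i => Q i.succ 0) ⬝ᵥ x)
        + x ⬝ᵥ (Q.submatrix Fin.succ Fin.succ) *ᵥ x := by
  have hs : ∀ j : Fin n, Q 0 j.succ = Q j.succ 0 := fun j => by
    conv_lhs => rw [← hsym]
    rfl
  simp only [dotProduct, mulVec, Fin.sum_univ_succ, Fin.cons_zero, Fin.cons_succ,
    submatrix_apply, Finset.mul_sum, Finset.sum_add_distrib, mul_add, add_mul, mul_one, one_mul]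
  simp_rw [hs]
  have key : ∑ i : Fin n, x i * Q i.succ 0 + ∑ i : Fin n, Q i.succ 0 * x i
      = ∑ i : Fin n, 2 * (Q i.succ 0 * x i) := by
    rw [← Finset.sum_add_distrib]
    exact Finset.sum_congr rfl fun i _ => by ring
  linarith [key]

lemma integral_exp_neg_half_id (k : ℕ) :
    ∫ x : Fin k → ℝ, rexp (-(1/2) * (x ⬝ᵥ x)) = (√(2*π)) ^ k := by
  have h1 : ∀ x : Fin k → ℝ, rexp (-(1/2) * (x ⬝ᵥ x))
      = ∏ i, rexp (-(1/2) * (x i)^2) := by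
    intro x
    rw [← Real.exp_sum]
    congr 1
    simp [dotProduct, Finset.mul_sum]
    ring_nf
  simp_rw [h1]
  rw [volume_pi, MeasureTheory.integral_fintype_prod_eq_pow (ι := Fin k) (fun t : ℝ => rexp (-(1/2) * t^2))]
  have : ∫ t : ℝ, rexp (-(1/2) * t^2) = √(2*π) := by
    rw [integral_gaussian (1/2)]
    norm_num
    ring
  rw [this]
  simp

open scoped MatrixOrder in
lemma integral_exp_neg_half_quad {k : ℕ} (A : Matrix (Fin k) (Fin k) ℝ) (hA : A.PosDef) :
    ∫ x : Fin k → ℝ, rexp (-(1/2) * (x ⬝ᵥ A *ᵥ x)) = (√(2*π)) ^ k / A.det ^ ((1:ℝ)/2) := by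
  set S := CFC.sqrt A with hSdef
  have hS : S.PosSemidef := (CFC.sqrt_nonneg A).posSemidef
  have hSS : S * S = A := CFC.sqrt_mul_sqrt_self A hA.posSemidef.nonneg
  have hSsym : Sᵀ = S := by
    conv_rhs => rw [← hS.1]
    ext i j
    simp [conjTranspose_apply]
  have hdet0 : 0 ≤ S.det := by
    exact hS.det_nonneg
  have hdetA : A.det = S.det * S.det := by rw [← hSS, det_mul]
  have hdS : 0 < S.det := by nlinarith [hA.det_pos]
  have hrpow : A.det ^ ((1:ℝ)/2) = S.det := by
    rw [← Real.sqrt_eq_rpow, hdetA, ← pow_two, Real.sqrt_sq hdS.le]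
  have hdSi : (S⁻¹).det ≠ 0 := by
    rw [det_nonsing_inv, Ring.inverse_eq_inv]
    exact inv_ne_zero hdS.ne'
  have hmap := Real.map_matrix_volume_pi_eq_smul_volume_pi hdSi
  have hg : ∀ x : Fin k → ℝ, rexp (-(1/2) * ((S⁻¹ *ᵥ x) ⬝ᵥ A *ᵥ (S⁻¹ *ᵥ x)))
      = rexp (-(1/2) * (x ⬝ᵥ x)) := by
    intro x
    congr 2
    have h1 : A *ᵥ (S⁻¹ *ᵥ x) = S *ᵥ x := by
      rw [mulVec_mulVec, ← hSS, Matrix.mul_assoc, Matrix.mul_nonsing_inv _ hdS.ne'.isUnit,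
        Matrix.mul_one]
    rw [h1, dotProduct_mulVec, ← mulVec_transpose, hSsym, mulVec_mulVec,
      Matrix.mul_nonsing_inv _ hdS.ne'.isUnit, one_mulVec]
  have hquadcont : Continuous fun x : Fin k → ℝ => x ⬝ᵥ A *ᵥ x := by
    simp only [dotProduct, mulVec]
    exact continuous_finset_sum _ fun i _ => (continuous_apply i).mul
      (continuous_finset_sum _ fun j _ => continuous_const.mul (continuous_apply j))
  have hcont : Continuous fun x : Fin k → ℝ => rexp (-(1/2) * (x ⬝ᵥ A *ᵥ x)) :=
    Real.continuous_exp.comp (continuous_const.mul hquadcont)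
  have hmeas : Measurable (toLin' (S⁻¹) : (Fin k → ℝ) →ₗ[ℝ] (Fin k → ℝ)) :=
    (LinearMap.continuous_of_finiteDimensional _).measurable
  have e1 : ((√(2*π)) ^ k : ℝ)
      = ∫ x : Fin k → ℝ, rexp (-(1/2) * ((toLin' (S⁻¹) x) ⬝ᵥ A *ᵥ (toLin' (S⁻¹) x))) := by
    rw [← integral_exp_neg_half_id k]
    simp_rw [toLin'_apply, hg]
  have e2 : ∫ x : Fin k → ℝ, rexp (-(1/2) * ((toLin' (S⁻¹) x) ⬝ᵥ A *ᵥ (toLin' (S⁻¹) x)))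
      = ∫ y, rexp (-(1/2) * (y ⬝ᵥ A *ᵥ y)) ∂(Measure.map (toLin' (S⁻¹)) volume) :=
    (integral_map hmeas.aemeasurable hcont.aestronglyMeasurable).symm
  have habs : |(S⁻¹).det⁻¹| = S.det := by
    rw [det_nonsing_inv, Ring.inverse_eq_inv, inv_inv, abs_of_pos hdS]
  have e3 : ((√(2*π)) ^ k : ℝ) = S.det * ∫ x : Fin k → ℝ, rexp (-(1/2) * (x ⬝ᵥ A *ᵥ x)) := by
    rw [e1, e2, hmap, integral_smul_measure, ENNReal.toReal_ofReal (by positivity), habs,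
      smul_eq_mul]
  rw [hrpow, eq_div_iff hdS.ne']
  linarith [e3]

theorem mgf_bound_quadratic_gaussian
    {n : ℕ} (Q : Matrix (Fin (n + 1)) (Fin (n + 1)) ℝ) (hQ : Q.PosSemidef)
    (lam : ℝ) (hlam : 0 < lam) :
    ∫ x : Fin n → ℝ, Real.exp (-lam * (Fin.cons 1 x ⬝ᵥ Q *ᵥ Fin.cons 1 x))
        ∂(Measure.pi fun _ => gaussianReal 0 1)
      ≤ ((1 + (2 * lam) • Q.submatrix Fin.succ Fin.succ).det) ^ (-(1 / 2) : ℝ) := by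
    classical
  set B := Q.submatrix Fin.succ Fin.succ with hBdef
  set q : Fin n → ℝ := fun i => Q i.succ 0 with hqdef
  have hQsym : Qᵀ = Q := by
    conv_rhs => rw [← hQ.1]
    ext i j
    simp [conjTranspose_apply]
  have hQs : ∀ a b, Q a b = Q b a := fun a b => by
    have h := congrFun (congrFun hQsym b) a
    rwa [transpose_apply] at h
  have hB : B.PosSemidef := hQ.submatrix Fin.succ
  have hBsmul : ((2*lam) • B).PosSemidef := by
    refine Matrix.PosSemidef.of_dotProduct_mulVec_nonneg ?_ fun x => ?_
    · rw [Matrix.IsHermitian, conjTranspose_smul, star_trivial, hB.1]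
    · rw [smul_mulVec, dotProduct_smul, smul_eq_mul]
      have := hB.dotProduct_mulVec_nonneg x
      rw [star_trivial] at this ⊢
      exact mul_nonneg (by positivity) this
  set A := (1 : Matrix (Fin n) (Fin n) ℝ) + (2*lam) • B with hAdef
  have hA : A.PosDef := Matrix.PosDef.add_posSemidef Matrix.PosDef.one hBsmul
  have hBsym : Bᵀ = B := by
    ext i j
    exact hQs j.succ i.succ
  have hAsym : Aᵀ = A := by
    rw [hAdef, transpose_add, transpose_one, transpose_smul, hBsym]
  have hdetA : 0 < A.det := hA.det_pos
  have hAunit : IsUnit A.det := hdetA.ne'.isUnit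
  set v : Fin n → ℝ := A⁻¹ *ᵥ q with hvdef
  have hAv : A *ᵥ v = q := by
    rw [hvdef, mulVec_mulVec, Matrix.mul_nonsing_inv _ hAunit, one_mulVec]
  set m : Fin n → ℝ := (2*lam) • v with hmdef
  set r : ℝ := lam * Q 0 0 - 2*lam^2 * (q ⬝ᵥ v) with hrdef
  have hAx : ∀ x : Fin n → ℝ, x ⬝ᵥ A *ᵥ x = x ⬝ᵥ x + 2*lam * (x ⬝ᵥ B *ᵥ x) := by
    intro x
    rw [hAdef, add_mulVec, one_mulVec, dotProduct_add, smul_mulVec, dotProduct_smul,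
      smul_eq_mul]
  have hAm : A *ᵥ m = (2*lam) • q := by rw [hmdef, mulVec_smul, hAv]
  have hxAm : ∀ x : Fin n → ℝ, x ⬝ᵥ A *ᵥ m = 2*lam*(q ⬝ᵥ x) := by
    intro x
    rw [hAm, dotProduct_smul, smul_eq_mul, dotProduct_comm]
  have hmAm : m ⬝ᵥ A *ᵥ m = 4*lam^2*(q ⬝ᵥ v) := by
    rw [hxAm m, hmdef, dotProduct_smul, smul_eq_mul]
    ring
  have hxm : ∀ x : Fin n → ℝ, (x + m) ⬝ᵥ A *ᵥ (x + m)
      = x ⬝ᵥ A *ᵥ x + 4*lam*(q ⬝ᵥ x) + 4*lam^2*(q ⬝ᵥ v) := by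
    intro x
    have hcross : m ⬝ᵥ A *ᵥ x = x ⬝ᵥ A *ᵥ m := dot_symm hAsym m x
    rw [add_dotProduct, mulVec_add, dotProduct_add, dotProduct_add, hcross, hxAm x, hmAm]
    ring
  have hquad : ∀ x : Fin n → ℝ, Fin.cons 1 x ⬝ᵥ Q *ᵥ Fin.cons 1 x
      = Q 0 0 + 2*(q ⬝ᵥ x) + x ⬝ᵥ B *ᵥ x := fun x => cons_quad Q hQsym x
  have hexp : ∀ x : Fin n → ℝ,
      -lam * (Fin.cons 1 x ⬝ᵥ Q *ᵥ Fin.cons 1 x) - (1/2)*(x ⬝ᵥ x)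
        = -(1/2)*((x + m) ⬝ᵥ A *ᵥ (x + m)) - r := by
    intro x
    rw [hquad x, hxm x, hAx x, hrdef]
    ring
  have hvAv : v ⬝ᵥ A *ᵥ v = q ⬝ᵥ v := by rw [hAv, dotProduct_comm]
  have hvv : 0 ≤ v ⬝ᵥ v := Finset.sum_nonneg fun i _ => mul_self_nonneg _
  have hvBv : 2*lam*(v ⬝ᵥ B *ᵥ v) = q ⬝ᵥ v - v ⬝ᵥ v := by
    have h1 := hAx v
    rw [hvAv] at h1
    linarith
  have hr0 : 0 ≤ r := by
    have hpsd := hQ.dotProduct_mulVec_nonneg (Fin.cons 1 (-m))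
    rw [star_trivial, hquad (-m)] at hpsd
    have h1 : q ⬝ᵥ (-m) = -(2*lam)*(q ⬝ᵥ v) := by
      rw [hmdef, ← smul_neg, dotProduct_smul, smul_eq_mul, dotProduct_neg]
      ring
    have h2 : (-m) ⬝ᵥ B *ᵥ (-m) = 4*lam^2 * (v ⬝ᵥ B *ᵥ v) := by
      rw [hmdef, ← smul_neg, smul_dotProduct, mulVec_smul, dotProduct_smul, smul_eq_mul,
        smul_eq_mul, neg_dotProduct, mulVec_neg, dotProduct_neg, neg_neg]
      ring
    rw [h1, h2] at hpsd
    rw [hrdef]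
    nlinarith [hpsd, hvBv, hvv, hlam]
  rw [integral_pi_gaussian]
  have hprod : ∀ x : Fin n → ℝ, (∏ i, gaussianPDFReal 0 1 (x i))
      = ((√(2*π))⁻¹)^n * rexp (-(1/2) * (x ⬝ᵥ x)) := by
    intro x
    have h1 : ∀ t : ℝ, gaussianPDFReal 0 1 t = (√(2*π))⁻¹ * rexp (-(1/2) * (t*t)) := by
      intro t
      simp only [gaussianPDFReal, NNReal.coe_one, mul_one, sub_zero]
      congr 2
      ring
    simp_rw [h1]
    rw [Finset.prod_mul_distrib, Finset.prod_const, Finset.card_univ, Fintype.card_fin,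
      ← Real.exp_sum]
    congr 1
    rw [dotProduct, Finset.mul_sum]
  have hpt : ∀ x : Fin n → ℝ,
      (∏ i, gaussianPDFReal 0 1 (x i)) * rexp (-lam * (Fin.cons 1 x ⬝ᵥ Q *ᵥ Fin.cons 1 x))
        = ((√(2*π))⁻¹)^n * rexp (-r) * rexp (-(1/2)*((x + m) ⬝ᵥ A *ᵥ (x + m))) := by
    intro x
    rw [hprod x, mul_assoc, ← Real.exp_add, mul_assoc, ← Real.exp_add]
    congr 2
    have h := hexp x
    linarith
  simp_rw [hpt]
  rw [MeasureTheory.integral_const_mul]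
  have htrans : ∫ x : Fin n → ℝ, rexp (-(1/2)*((x + m) ⬝ᵥ A *ᵥ (x + m)))
      = ∫ x : Fin n → ℝ, rexp (-(1/2)*(x ⬝ᵥ A *ᵥ x)) :=
    MeasureTheory.integral_add_right_eq_self (fun z => rexp (-(1/2)*(z ⬝ᵥ A *ᵥ z))) m
  rw [htrans, integral_exp_neg_half_quad A hA, Real.rpow_neg hdetA.le]
  have hpow : (0:ℝ) < A.det ^ ((1:ℝ)/2) := Real.rpow_pos_of_pos hdetA _
  have hsq : (0:ℝ) < √(2*π) := Real.sqrt_pos.mpr (by positivity)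
  have hexp1 : rexp (-r) ≤ 1 := by
    rw [← Real.exp_zero]
    exact Real.exp_le_exp.mpr (neg_nonpos.mpr hr0)
  have heq : ((√(2*π))⁻¹)^n * rexp (-r) * ((√(2*π))^n / A.det^((1:ℝ)/2))
      = rexp (-r) / A.det^((1:ℝ)/2) := by
    field_simp
    rw [← mul_pow, one_div_mul_cancel hsq.ne', one_pow]
  rw [heq, inv_eq_one_div]
  gcongr
end

section
/- Fix ε ∈ (0,1) and σ > 0, and define h(r) = (1/√(2π)) ∫_{-(1+ε)r/σ}^{-(1-ε)r/σ} exp(-x²/2) dx for r > 0. Then h attains its maximum over r > 0 at r★ = σ·√( log((1+ε)/(1-ε)) / (2ε) ). -/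
open Real

theorem gaussian_interval_measure_max
    (ε σ : ℝ) (hε : ε ∈ Set.Ioo (0 : ℝ) 1) (hσ : 0 < σ) (r : ℝ) (hr : 0 < r) :
    (1 / Real.sqrt (2 * π)) *
        (∫ x in (-(1 + ε) * r / σ)..(-(1 - ε) * r / σ), Real.exp (-x ^ 2 / 2))
      ≤ (1 / Real.sqrt (2 * π)) *
        (∫ x in
            (-(1 + ε) * (σ * Real.sqrt (Real.log ((1 + ε) / (1 - ε)) / (2 * ε))) / σ)..(
            -(1 - ε) * (σ * Real.sqrt (Real.log ((1 + ε) / (1 - ε)) / (2 * ε))) / σ),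
          Real.exp (-x ^ 2 / 2)) := by
  obtain ⟨hε0, hε1⟩ := hε
  have h1ε : (0:ℝ) < 1 - ε := by linarith
  have h1ε' : (0:ℝ) < 1 + ε := by linarith
  set L := Real.log ((1 + ε) / (1 - ε)) with hLdef
  have hL : 0 < L := Real.log_pos (by rw [lt_div_iff₀ h1ε]; linarith)
  have hLlog : L = Real.log (1 + ε) - Real.log (1 - ε) :=
    Real.log_div (by positivity) h1ε.ne'
  set c := Real.sqrt (L / (2 * ε)) with hcdef
  have hc2 : c ^ 2 = L / (2 * ε) := Real.sq_sqrt (by positivity)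
  have hc : 0 < c := Real.sqrt_pos.2 (by positivity)
  set rs := σ * c with hrsdef
  have hrs : 0 < rs := by positivity
  have hrs2 : 2 * ε * rs ^ 2 = σ ^ 2 * L := by
    rw [hrsdef, mul_pow, hc2]; field_simp
  have hcont : Continuous fun x : ℝ => Real.exp (-x ^ 2 / 2) := by continuity
  set G : ℝ → ℝ := fun t => ∫ x in (0:ℝ)..t, Real.exp (-x ^ 2 / 2) with hGdef
  have hG : ∀ t : ℝ, HasDerivAt G (Real.exp (-t ^ 2 / 2)) t := fun t =>
    (hcont.integral_hasStrictDerivAt 0 t).hasDerivAt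
  set F : ℝ → ℝ := fun r => G (-(1 - ε) * r / σ) - G (-(1 + ε) * r / σ) with hFdef
  have hFeq : ∀ u : ℝ,
      (∫ x in (-(1 + ε) * u / σ)..(-(1 - ε) * u / σ), Real.exp (-x ^ 2 / 2)) = F u := by
    intro u
    rw [hFdef]
    simp only [hGdef]
    rw [intervalIntegral.integral_interval_sub_left (hcont.intervalIntegrable _ _)
      (hcont.intervalIntegrable _ _)]
  have hD : ∀ u : ℝ, HasDerivAt F
      (Real.exp (-(-(1 - ε) * u / σ) ^ 2 / 2) * (-(1 - ε) / σ)
        - Real.exp (-(-(1 + ε) * u / σ) ^ 2 / 2) * (-(1 + ε) / σ)) u := by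
    intro u
    have hb : HasDerivAt (fun v : ℝ => -(1 - ε) * v / σ) (-(1 - ε) / σ) u := by
      simpa using ((hasDerivAt_id u).const_mul (-(1 - ε))).div_const σ
    have ha : HasDerivAt (fun v : ℝ => -(1 + ε) * v / σ) (-(1 + ε) / σ) u := by
      simpa using ((hasDerivAt_id u).const_mul (-(1 + ε))).div_const σ
    exact ((hG _).comp u hb).sub ((hG _).comp u ha)
  have hFdiff : Differentiable ℝ F := fun u => (hD u).differentiableAt
  have rew : ∀ t : ℝ, 0 < t → ∀ x : ℝ,
      t * Real.exp (-(-t * x / σ) ^ 2 / 2)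
        = Real.exp (Real.log t - t ^ 2 * x ^ 2 / (2 * σ ^ 2)) := by
    intro t ht x
    rw [show Real.log t - t ^ 2 * x ^ 2 / (2 * σ ^ 2)
        = Real.log t + (-(-t * x / σ) ^ 2 / 2) from by field_simp; ring,
      Real.exp_add, Real.exp_log ht]
  have h2σ : (0:ℝ) < 2 * σ ^ 2 := by positivity
  have key : ∀ x : ℝ, x ^ 2 ≤ rs ^ 2 →
      (1 - ε) * Real.exp (-(-(1 - ε) * x / σ) ^ 2 / 2)
        ≤ (1 + ε) * Real.exp (-(-(1 + ε) * x / σ) ^ 2 / 2) := by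
    intro x hx
    rw [rew _ h1ε, rew _ h1ε', Real.exp_le_exp]
    have h2 : ((1 + ε) ^ 2 * x ^ 2 - (1 - ε) ^ 2 * x ^ 2) / (2 * σ ^ 2) ≤ L :=
      (div_le_iff₀ h2σ).2 (by nlinarith)
    rw [sub_div] at h2
    linarith
  have key2 : ∀ x : ℝ, rs ^ 2 ≤ x ^ 2 →
      (1 + ε) * Real.exp (-(-(1 + ε) * x / σ) ^ 2 / 2)
        ≤ (1 - ε) * Real.exp (-(-(1 - ε) * x / σ) ^ 2 / 2) := by
    intro x hx
    rw [rew _ h1ε, rew _ h1ε', Real.exp_le_exp]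
    have h2 : L ≤ ((1 + ε) ^ 2 * x ^ 2 - (1 - ε) ^ 2 * x ^ 2) / (2 * σ ^ 2) :=
      (le_div_iff₀ h2σ).2 (by nlinarith)
    rw [sub_div] at h2
    linarith
  have hmono : MonotoneOn F (Set.Icc 0 rs) := by
    apply monotoneOn_of_deriv_nonneg (convex_Icc 0 rs) hFdiff.continuous.continuousOn
      (fun x _ => (hFdiff x).differentiableWithinAt)
    intro x hx
    rw [interior_Icc] at hx
    rw [(hD x).deriv]
    have hk := key x (by nlinarith [hx.1.le, hx.2.le])
    have h1 : Real.exp (-(-(1 - ε) * x / σ) ^ 2 / 2) * (-(1 - ε) / σ)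
        = -((1 - ε) * Real.exp (-(-(1 - ε) * x / σ) ^ 2 / 2)) / σ := by ring
    have h2 : Real.exp (-(-(1 + ε) * x / σ) ^ 2 / 2) * (-(1 + ε) / σ)
        = -((1 + ε) * Real.exp (-(-(1 + ε) * x / σ) ^ 2 / 2)) / σ := by ring
    rw [h1, h2, sub_nonneg, div_le_div_iff_of_pos_right hσ]
    linarith
  have hanti : AntitoneOn F (Set.Ici rs) := by
    apply antitoneOn_of_deriv_nonpos (convex_Ici rs) hFdiff.continuous.continuousOn
      (fun x _ => (hFdiff x).differentiableWithinAt)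
    intro x hx
    rw [interior_Ici] at hx
    rw [(hD x).deriv]
    have hk := key2 x (by nlinarith [hrs.le, (hrs.trans hx).le, (Set.mem_Ioi.1 hx).le])
    have h1 : Real.exp (-(-(1 - ε) * x / σ) ^ 2 / 2) * (-(1 - ε) / σ)
        = -((1 - ε) * Real.exp (-(-(1 - ε) * x / σ) ^ 2 / 2)) / σ := by ring
    have h2 : Real.exp (-(-(1 + ε) * x / σ) ^ 2 / 2) * (-(1 + ε) / σ)
        = -((1 + ε) * Real.exp (-(-(1 + ε) * x / σ) ^ 2 / 2)) / σ := by ring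
    rw [h1, h2, sub_nonpos, div_le_div_iff_of_pos_right hσ]
    linarith
  apply mul_le_mul_of_nonneg_left _ (by positivity)
  rw [hFeq r, hFeq rs]
  rcases le_total r rs with h | h
  · exact hmono ⟨hr.le, h⟩ ⟨hrs.le, le_rfl⟩ h
  · exact hanti (Set.mem_Ici.2 le_rfl) (Set.mem_Ici.2 h) h
end

section
/- Define ζ(ε) = (1/2)[ erf( -(1-ε)/√2 · √(log((1+ε)/(1-ε))/(2ε)) ) + erf( (1+ε)/√2 · √(log((1+ε)/(1-ε))/(2ε)) ) ] for ε ∈ (0,1). Then ζ is convex on (0,1), ζ(ε) → 0 as ε → 0⁺, and ζ(ε) → 1/2 as ε → 1⁻. -/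
open Real Filter Topology

noncomputable def erf (x : ℝ) : ℝ := (2 / Real.sqrt π) * ∫ t in (0 : ℝ)..x, Real.exp (-t ^ 2)

noncomputable def zeta (ε : ℝ) : ℝ :=
  (1 / 2) *
    (erf (-(1 - ε) / Real.sqrt 2 * Real.sqrt (Real.log ((1 + ε) / (1 - ε)) / (2 * ε))) +
     erf ((1 + ε) / Real.sqrt 2 * Real.sqrt (Real.log ((1 + ε) / (1 - ε)) / (2 * ε))))

lemma contGauss : Continuous fun t : ℝ => Real.exp (-t ^ 2) := by fun_prop

lemma erf_hasDerivAt (x : ℝ) :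
    HasDerivAt erf (2 / Real.sqrt π * Real.exp (-x ^ 2)) x := by
  have h : HasDerivAt (fun y : ℝ => ∫ t in (0:ℝ)..y, Real.exp (-t ^ 2)) (Real.exp (-x ^ 2)) x :=
    intervalIntegral.integral_hasDerivAt_right (contGauss.intervalIntegrable _ _)
      (contGauss.aestronglyMeasurable.stronglyMeasurableAtFilter) contGauss.continuousAt
  exact h.const_mul _

lemma erf_continuous : Continuous erf :=
  continuous_iff_continuousAt.2 fun x => (erf_hasDerivAt x).differentiableAt.continuousAt

lemma erf_neg (x : ℝ) : erf (-x) = - erf x := by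
  have h : (∫ t in (0:ℝ)..x, Real.exp (-(-t) ^ 2)) = ∫ t in (-x)..(-(0:ℝ)), Real.exp (-t ^ 2) :=
    intervalIntegral.integral_comp_neg (fun t => Real.exp (-t ^ 2))
  simp only [neg_sq, neg_zero] at h
  have h2 : (∫ t in (0:ℝ)..(-x), Real.exp (-t ^ 2)) = - ∫ t in (-x)..(0:ℝ), Real.exp (-t ^ 2) :=
    intervalIntegral.integral_symm _ _
  unfold erf
  rw [h2, ← h]; ring

lemma erf_zero : erf 0 = 0 := by simp [erf]

lemma erf_tendsto_one : Tendsto erf atTop (𝓝 1) := by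
  have hi : MeasureTheory.IntegrableOn (fun t : ℝ => Real.exp (-t ^ 2)) (Set.Ioi 0) := by
    have := (integrableOn_Ioi_exp_neg_mul_sq_iff (b := (1:ℝ))).2 one_pos
    simpa using this
  have h := MeasureTheory.intervalIntegral_tendsto_integral_Ioi 0 hi (tendsto_id (α := ℝ))
  have hval : (∫ t in Set.Ioi (0:ℝ), Real.exp (-t ^ 2)) = Real.sqrt π / 2 := by
    have := integral_gaussian_Ioi 1
    simpa using this
  rw [hval] at h
  have h2 := h.const_mul (2 / Real.sqrt π)
  have hπ : Real.sqrt π ≠ 0 := by positivity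
  have : 2 / Real.sqrt π * (Real.sqrt π / 2) = 1 := by field_simp
  rw [this] at h2
  exact h2

noncomputable def S (ε : ℝ) : ℝ := Real.log ((1 + ε) / (1 - ε)) / (2 * ε)

lemma S_pos {ε : ℝ} (h0 : 0 < ε) (h1 : ε < 1) : 0 < S ε := by
  have h : 1 < (1 + ε) / (1 - ε) := by
    rw [lt_div_iff₀ (by linarith)]; linarith
  exact div_pos (Real.log_pos h) (by linarith)

lemma S_hasDerivAt {ε : ℝ} (h0 : 0 < ε) (h1 : ε < 1) :
    HasDerivAt S (1 / (ε * (1 - ε ^ 2)) - S ε / ε) ε := by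
  have h1ε : (0:ℝ) < 1 - ε := by linarith
  have hq : 0 < (1 + ε) / (1 - ε) := by positivity
  have hden : HasDerivAt (fun x : ℝ => 1 - x) (-1) ε := by
    simpa using (hasDerivAt_id ε).const_sub 1
  have hnum : HasDerivAt (fun x : ℝ => 1 + x) 1 ε := by
    simpa using (hasDerivAt_id ε).const_add 1
  have hqd : HasDerivAt (fun x : ℝ => (1 + x) / (1 - x))
      ((1 * (1 - ε) - (1 + ε) * (-1)) / (1 - ε) ^ 2) ε :=
    hnum.div hden (by linarith)
  have hsq : 1 - ε ^ 2 ≠ 0 := by nlinarith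
  have hL : HasDerivAt (fun x : ℝ => Real.log ((1 + x) / (1 - x))) (2 / (1 - ε ^ 2)) ε := by
    have := (Real.hasDerivAt_log (ne_of_gt hq)).comp ε hqd
    refine this.congr_deriv ?_
    field_simp
    ring
  have h2ε : HasDerivAt (fun x : ℝ => 2 * x) 2 ε := by
    simpa using (hasDerivAt_id ε).const_mul 2
  have := hL.div h2ε (by positivity)
  refine this.congr_deriv ?_
  have hLS : Real.log ((1 + ε) / (1 - ε)) = 2 * ε * S ε := by
    unfold S; field_simp
  rw [hLS]
  field_simp

noncomputable def Hf (ε : ℝ) : ℝ :=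
  (1 / 2) * Real.log (S ε) - Real.log (1 - ε) - (1 + ε) ^ 2 * S ε / 2

lemma Hf_hasDerivAt {ε : ℝ} (h0 : 0 < ε) (h1 : ε < 1) :
    HasDerivAt Hf ((1 - (1 - ε ^ 2) * S ε) ^ 2 / (2 * ε * ((1 - ε ^ 2) * S ε))) ε := by
  have h1ε : (0:ℝ) < 1 - ε := by linarith
  have hsq : (0:ℝ) < 1 - ε ^ 2 := by nlinarith
  have hSpos := S_pos h0 h1
  have hS := S_hasDerivAt h0 h1
  set s' := 1 / (ε * (1 - ε ^ 2)) - S ε / ε with hs'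
  have hden : HasDerivAt (fun x : ℝ => 1 - x) (-1) ε := by
    simpa using (hasDerivAt_id ε).const_sub 1
  have hnum : HasDerivAt (fun x : ℝ => 1 + x) 1 ε := by
    simpa using (hasDerivAt_id ε).const_add 1
  have d1 : HasDerivAt (fun x => (1 / 2) * Real.log (S x)) ((1 / 2) * ((S ε)⁻¹ * s')) ε :=
    (((Real.hasDerivAt_log (ne_of_gt hSpos)).comp ε hS)).const_mul _
  have d2 : HasDerivAt (fun x : ℝ => Real.log (1 - x)) ((1 - ε)⁻¹ * (-1)) ε :=
    (Real.hasDerivAt_log (ne_of_gt h1ε)).comp ε hden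
  have d3 : HasDerivAt (fun x : ℝ => (1 + x) ^ 2 * S x / 2)
      ((2 * (1 + ε) ^ 1 * 1 * S ε + (1 + ε) ^ 2 * s') / 2) ε := by
    exact ((hnum.pow 2).mul hS).div_const 2
  have := (d1.sub d2).sub d3
  refine this.congr_deriv ?_
  rw [hs']
  field_simp
  ring


noncomputable def Ff (ε : ℝ) : ℝ := Real.sqrt (2 / π) * Real.exp (Hf ε)

lemma zeta_hasDerivAt {ε : ℝ} (h0 : 0 < ε) (h1 : ε < 1) :
    HasDerivAt zeta (Ff ε) ε := by
  have h1ε : (0:ℝ) < 1 - ε := by linarith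
  have hsq : (0:ℝ) < 1 - ε ^ 2 := by nlinarith
  have hq : 0 < (1 + ε) / (1 - ε) := by positivity
  have hSpos := S_pos h0 h1
  have hS := S_hasDerivAt h0 h1
  set s' := 1 / (ε * (1 - ε ^ 2)) - S ε / ε with hs'
  have hden : HasDerivAt (fun x : ℝ => 1 - x) (-1) ε := by
    simpa using (hasDerivAt_id ε).const_sub 1
  have hsqrtS : HasDerivAt (fun x => Real.sqrt (S x)) (s' / (2 * Real.sqrt (S ε))) ε := by
    have := (Real.hasDerivAt_sqrt (ne_of_gt hSpos)).comp ε hS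
    exact this.congr_deriv (by ring)
  have hfacA : HasDerivAt (fun x : ℝ => -(1 - x) / Real.sqrt 2) (1 / Real.sqrt 2) ε := by
    have := (hden.neg).div_const (Real.sqrt 2)
    simpa using this
  have hfacB : HasDerivAt (fun x : ℝ => (1 + x) / Real.sqrt 2) (1 / Real.sqrt 2) ε := by
    have : HasDerivAt (fun x : ℝ => 1 + x) 1 ε := by simpa using (hasDerivAt_id ε).const_add 1
    simpa using this.div_const (Real.sqrt 2)
  set t := Real.sqrt (S ε) with ht
  set A' := 1 / Real.sqrt 2 * t + -(1 - ε) / Real.sqrt 2 * (s' / (2 * t)) with hA'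
  set B' := 1 / Real.sqrt 2 * t + (1 + ε) / Real.sqrt 2 * (s' / (2 * t)) with hB'
  have hA : HasDerivAt (fun x => -(1 - x) / Real.sqrt 2 * Real.sqrt (S x)) A' ε :=
    hfacA.mul hsqrtS
  have hB : HasDerivAt (fun x => (1 + x) / Real.sqrt 2 * Real.sqrt (S x)) B' ε :=
    hfacB.mul hsqrtS
  have herfA := (erf_hasDerivAt (-(1 - ε) / Real.sqrt 2 * t)).comp ε hA
  have herfB := (erf_hasDerivAt ((1 + ε) / Real.sqrt 2 * t)).comp ε hB
  have hd := (herfA.add herfB).const_mul (1/2 : ℝ)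
  have hzeta : HasDerivAt zeta
      ((1/2 : ℝ) * (2 / Real.sqrt π * Real.exp (-(-(1 - ε) / Real.sqrt 2 * t) ^ 2) * A' +
        2 / Real.sqrt π * Real.exp (-((1 + ε) / Real.sqrt 2 * t) ^ 2) * B')) ε := by
    exact hd
  convert hzeta using 1
  -- now value equality
  have hr2 : (Real.sqrt 2) ^ 2 = 2 := Real.sq_sqrt (by norm_num)
  have ht2 : t ^ 2 = S ε := Real.sq_sqrt hSpos.le
  have htpos : 0 < t := Real.sqrt_pos.2 hSpos
  have hr2pos : (0:ℝ) < Real.sqrt 2 := by positivity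
  have hrπpos : (0:ℝ) < Real.sqrt π := Real.sqrt_pos.2 Real.pi_pos
  have hL2 : Real.log ((1 + ε) / (1 - ε)) = 2 * ε * S ε := by
    unfold S; field_simp
  have hA2 : (-(1 - ε) / Real.sqrt 2 * t) ^ 2 = (1 - ε) ^ 2 * S ε / 2 := by
    rw [mul_pow, div_pow, hr2, ht2]; ring
  have hB2 : ((1 + ε) / Real.sqrt 2 * t) ^ 2 = (1 + ε) ^ 2 * S ε / 2 := by
    rw [mul_pow, div_pow, hr2, ht2]; ring
  have hexpA : Real.exp (-(-(1 - ε) / Real.sqrt 2 * t) ^ 2) =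
      Real.exp (-((1 + ε) ^ 2 * S ε / 2)) * ((1 + ε) / (1 - ε)) := by
    rw [hA2, ← Real.exp_log hq, ← Real.exp_add, hL2]
    ring_nf
  have hexpH : Real.exp (Hf ε) = Real.exp (-((1 + ε) ^ 2 * S ε / 2)) * t / (1 - ε) := by
    unfold Hf
    rw [show (1/2 : ℝ) * Real.log (S ε) = Real.log t by
      rw [ht, Real.log_sqrt hSpos.le]; ring]
    rw [sub_sub, Real.exp_sub, Real.exp_add, Real.exp_log htpos, Real.exp_log h1ε,
      Real.exp_neg]
    field_simp
  have hsqrt2pi : Real.sqrt (2 / π) = Real.sqrt 2 / Real.sqrt π := Real.sqrt_div' 2 Real.pi_pos.le ▸ by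
    rw [Real.sqrt_div (by norm_num : (0:ℝ) ≤ 2)]
  unfold Ff
  rw [hexpH, hexpA, hB2, hsqrt2pi, hA', hB']
  set E := Real.exp (-((1 + ε) ^ 2 * S ε / 2))
  have hE : 0 < E := Real.exp_pos _
  have hne : (1-ε) ≠ 0 := ne_of_gt h1ε
  field_simp
  ring_nf
  linear_combination (2 * t ^ 2) * hr2

lemma log_ratio_hasDerivAt {ε : ℝ} (hm : -1 < ε) (h1 : ε < 1) :
    HasDerivAt (fun x : ℝ => Real.log ((1 + x) / (1 - x))) (2 / (1 - ε ^ 2)) ε := by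
  have h1ε : (0:ℝ) < 1 - ε := by linarith
  have h1ε' : (0:ℝ) < 1 + ε := by linarith
  have hq : 0 < (1 + ε) / (1 - ε) := by positivity
  have hden : HasDerivAt (fun x : ℝ => 1 - x) (-1) ε := by
    simpa using (hasDerivAt_id ε).const_sub 1
  have hnum : HasDerivAt (fun x : ℝ => 1 + x) 1 ε := by
    simpa using (hasDerivAt_id ε).const_add 1
  have hqd : HasDerivAt (fun x : ℝ => (1 + x) / (1 - x))
      ((1 * (1 - ε) - (1 + ε) * (-1)) / (1 - ε) ^ 2) ε :=
    hnum.div hden (by linarith)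
  have hsq : 1 - ε ^ 2 ≠ 0 := by nlinarith
  have := (Real.hasDerivAt_log (ne_of_gt hq)).comp ε hqd
  refine this.congr_deriv ?_
  field_simp
  ring

lemma zeta_convex : ConvexOn ℝ (Set.Ioo (0:ℝ) 1) zeta := by
  have hint : interior (Set.Ioo (0:ℝ) 1) = Set.Ioo 0 1 := isOpen_Ioo.interior_eq
  apply MonotoneOn.convexOn_of_deriv (convex_Ioo 0 1)
  · exact fun x hx =>
      (zeta_hasDerivAt hx.1 hx.2).differentiableAt.continuousAt.continuousWithinAt
  · rw [hint]
    exact fun x hx => (zeta_hasDerivAt hx.1 hx.2).differentiableAt.differentiableWithinAt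
  · rw [hint]
    have hHmono : MonotoneOn Hf (Set.Ioo (0:ℝ) 1) := by
      apply monotoneOn_of_hasDerivWithinAt_nonneg (f' := fun x =>
          (1 - (1 - x ^ 2) * S x) ^ 2 / (2 * x * ((1 - x ^ 2) * S x))) (convex_Ioo 0 1)
      · exact fun x hx => (Hf_hasDerivAt hx.1 hx.2).continuousAt.continuousWithinAt
      · rw [hint]
        exact fun x hx => (Hf_hasDerivAt hx.1 hx.2).hasDerivWithinAt
      · rw [hint]
        intro x hx
        have hSpos := S_pos hx.1 hx.2
        have hsq : (0:ℝ) < 1 - x ^ 2 := by nlinarith [hx.1, hx.2]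
        have hden : 0 < 2 * x * ((1 - x ^ 2) * S x) :=
          mul_pos (mul_pos two_pos hx.1) (mul_pos hsq hSpos)
        exact div_nonneg (sq_nonneg _) hden.le
    intro x hx y hy hxy
    rw [(zeta_hasDerivAt hx.1 hx.2).deriv, (zeta_hasDerivAt hy.1 hy.2).deriv]
    unfold Ff
    exact mul_le_mul_of_nonneg_left (Real.exp_le_exp.2 (hHmono hx hy hxy))
      (Real.sqrt_nonneg _)

lemma S_tendsto_zero : Tendsto S (𝓝[>] (0:ℝ)) (𝓝 1) := by
  have hL0 : HasDerivAt (fun x : ℝ => Real.log ((1 + x) / (1 - x))) 2 0 := by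
    simpa using log_ratio_hasDerivAt (ε := 0) (by norm_num) (by norm_num)
  have hslope := hasDerivAt_iff_tendsto_slope.1 hL0
  have hmono : 𝓝[>] (0:ℝ) ≤ 𝓝[≠] (0:ℝ) :=
    nhdsWithin_mono 0 fun x hx => ne_of_gt hx
  have h := (hslope.mono_left hmono).div_const 2
  norm_num at h
  apply h.congr
  intro x
  rw [slope_def_field]
  unfold S
  simp
  rw [div_div]
  ring_nf

lemma zeta_tendsto_zero : Tendsto zeta (𝓝[>] (0:ℝ)) (𝓝 0) := by
  have hg : Continuous fun p : ℝ × ℝ =>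
      (1/2 : ℝ) * (erf (-(1 - p.1) / Real.sqrt 2 * Real.sqrt p.2) +
        erf ((1 + p.1) / Real.sqrt 2 * Real.sqrt p.2)) := by
    apply Continuous.mul continuous_const
    apply Continuous.add
    · exact erf_continuous.comp ((((continuous_const.sub continuous_fst).neg).div_const
        _).mul (Real.continuous_sqrt.comp continuous_snd))
    · exact erf_continuous.comp (((continuous_const.add continuous_fst).div_const
        _).mul (Real.continuous_sqrt.comp continuous_snd))
  have hpair : Tendsto (fun ε : ℝ => (ε, S ε)) (𝓝[>] (0:ℝ)) (𝓝 ((0:ℝ), (1:ℝ))) :=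
    (tendsto_id.mono_left nhdsWithin_le_nhds).prodMk_nhds S_tendsto_zero
  have h := (hg.tendsto ((0:ℝ), (1:ℝ))).comp hpair
  have hval : (1/2 : ℝ) * (erf (-(1 - (0:ℝ)) / Real.sqrt 2 * Real.sqrt 1) +
      erf ((1 + (0:ℝ)) / Real.sqrt 2 * Real.sqrt 1)) = 0 := by
    rw [Real.sqrt_one]
    have : -(1 - (0:ℝ)) / Real.sqrt 2 * 1 = -((1 + (0:ℝ)) / Real.sqrt 2 * 1) := by ring
    rw [this, erf_neg]
    ring
  rw [hval] at h
  exact h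

lemma one_sub_tendsto : Tendsto (fun ε : ℝ => 1 - ε) (𝓝[<] (1:ℝ)) (𝓝[>] (0:ℝ)) := by
  rw [tendsto_nhdsWithin_iff]
  constructor
  · have : Tendsto (fun ε : ℝ => 1 - ε) (𝓝 (1:ℝ)) (𝓝 (1 - 1)) :=
      (continuous_const.sub continuous_id).tendsto 1
    norm_num at this
    exact this.mono_left nhdsWithin_le_nhds
  · filter_upwards [self_mem_nhdsWithin] with x hx
    simpa using sub_pos.2 (Set.mem_Iio.1 hx)

lemma sq_S_tendsto : Tendsto (fun ε : ℝ => (1 - ε) ^ 2 * S ε) (𝓝[<] (1:ℝ)) (𝓝 0) := by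
  have T1 : Tendsto (fun ε : ℝ => (1 - ε) ^ 2 * Real.log (1 + ε) / (2 * ε))
      (𝓝[<] (1:ℝ)) (𝓝 0) := by
    have c1 : ContinuousAt (fun ε : ℝ => (1 - ε) ^ 2) 1 := by fun_prop
    have c2 : ContinuousAt (fun ε : ℝ => Real.log (1 + ε)) 1 :=
      (Real.continuousAt_log (by norm_num)).comp (by fun_prop)
    have c3 : ContinuousAt (fun ε : ℝ => 2 * ε) 1 := by fun_prop
    have := ((c1.mul c2).div c3 (by norm_num)).tendsto
    norm_num at this
    exact this.mono_left nhdsWithin_le_nhds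
  have T2 : Tendsto (fun ε : ℝ => Real.log (1 - ε) * (1 - ε) ^ 2) (𝓝[<] (1:ℝ)) (𝓝 0) := by
    have h := (tendsto_log_mul_rpow_nhdsGT_zero (r := 2) (by norm_num)).comp one_sub_tendsto
    apply h.congr'
    filter_upwards [one_sub_tendsto self_mem_nhdsWithin] with x hx
    have : (0:ℝ) ≤ 1 - x := le_of_lt hx
    simp only [Function.comp]
    rw [show ((2:ℝ)) = ((2:ℕ):ℝ) by norm_num, Real.rpow_natCast]
  have T2' : Tendsto (fun ε : ℝ => Real.log (1 - ε) * (1 - ε) ^ 2 / (2 * ε))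
      (𝓝[<] (1:ℝ)) (𝓝 0) := by
    have c3 : Tendsto (fun ε : ℝ => 2 * ε) (𝓝[<] (1:ℝ)) (𝓝 2) := by
      have : Tendsto (fun ε : ℝ => 2 * ε) (𝓝 (1:ℝ)) (𝓝 (2 * 1)) :=
        (continuous_const.mul continuous_id).tendsto 1
      norm_num at this
      exact this.mono_left nhdsWithin_le_nhds
    have := T2.div c3 (by norm_num)
    norm_num at this
    exact this
  have := T1.sub T2'
  norm_num at this
  apply this.congr'
  filter_upwards [Ioo_mem_nhdsLT_of_mem (by norm_num : (1:ℝ) ∈ Set.Ioc (1/2) 1)] with x hx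
  have h1x : (0:ℝ) < 1 - x := by simp at hx; linarith [hx.2]
  have h0x : (0:ℝ) < x := by simp at hx; linarith [hx.1]
  unfold S
  rw [Real.log_div (by linarith) (by linarith)]
  field_simp

lemma A_tendsto : Tendsto (fun ε : ℝ => -(1 - ε) / Real.sqrt 2 *
    Real.sqrt (Real.log ((1 + ε) / (1 - ε)) / (2 * ε))) (𝓝[<] (1:ℝ)) (𝓝 0) := by
  have h := ((sq_S_tendsto.sqrt).neg).div_const (Real.sqrt 2)
  rw [Real.sqrt_zero, neg_zero, zero_div] at h
  apply h.congr'
  filter_upwards [Ioo_mem_nhdsLT_of_mem (by norm_num : (1:ℝ) ∈ Set.Ioc (1/2) 1)] with x hx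
  simp only [Set.mem_Ioo] at hx
  have h1x : (0:ℝ) ≤ 1 - x := by linarith [hx.2]
  have : Real.sqrt ((1 - x) ^ 2 * S x) = (1 - x) * Real.sqrt (S x) := by
    rw [Real.sqrt_mul (sq_nonneg _), Real.sqrt_sq h1x]
  rw [this]
  unfold S
  ring

lemma sqrt_tendsto_atTop : Tendsto Real.sqrt atTop atTop := by
  have h := (tendsto_rpow_atTop (by norm_num : (0:ℝ) < 1/2))
  apply h.congr
  intro x
  rw [Real.sqrt_eq_rpow]

lemma B_tendsto : Tendsto (fun ε : ℝ => (1 + ε) / Real.sqrt 2 *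
    Real.sqrt (Real.log ((1 + ε) / (1 - ε)) / (2 * ε))) (𝓝[<] (1:ℝ)) atTop := by
  have hinv : Tendsto (fun ε : ℝ => ((1:ℝ) - ε)⁻¹) (𝓝[<] (1:ℝ)) atTop :=
    tendsto_inv_nhdsGT_zero.comp one_sub_tendsto
  have hnum : Tendsto (fun ε : ℝ => 1 + ε) (𝓝[<] (1:ℝ)) (𝓝 2) := by
    have : Tendsto (fun ε : ℝ => 1 + ε) (𝓝 (1:ℝ)) (𝓝 (1 + 1)) :=
      (continuous_const.add continuous_id).tendsto 1
    norm_num at this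
    exact this.mono_left nhdsWithin_le_nhds
  have hquot : Tendsto (fun ε : ℝ => (1 + ε) / (1 - ε)) (𝓝[<] (1:ℝ)) atTop := by
    have := hnum.pos_mul_atTop (by norm_num) hinv
    apply this.congr
    intro x
    rw [div_eq_mul_inv]
  have hLtop : Tendsto (fun ε : ℝ => Real.log ((1 + ε) / (1 - ε))) (𝓝[<] (1:ℝ)) atTop :=
    Real.tendsto_log_atTop.comp hquot
  have hStop : Tendsto S (𝓝[<] (1:ℝ)) atTop := by
    apply tendsto_atTop_mono' _ _ (hLtop.atTop_div_const (by norm_num : (0:ℝ) < 2))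
    filter_upwards [Ioo_mem_nhdsLT_of_mem (by norm_num : (1:ℝ) ∈ Set.Ioc (1/2) 1)] with x hx
    simp only [Set.mem_Ioo] at hx
    have hLpos : 0 < Real.log ((1 + x) / (1 - x)) := by
      apply Real.log_pos
      rw [lt_div_iff₀ (by linarith [hx.2])]
      linarith [hx.1]
    unfold S
    exact div_le_div_of_nonneg_left hLpos.le (by linarith [hx.1]) (by linarith [hx.2])
  have hsqrtStop : Tendsto (fun ε : ℝ => Real.sqrt (S ε)) (𝓝[<] (1:ℝ)) atTop :=
    sqrt_tendsto_atTop.comp hStop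
  have hscaled := hsqrtStop.const_mul_atTop
    (show (0:ℝ) < 1 / Real.sqrt 2 by positivity)
  apply tendsto_atTop_mono' _ _ hscaled
  filter_upwards [Ioo_mem_nhdsLT_of_mem (by norm_num : (1:ℝ) ∈ Set.Ioc (1/2) 1)] with x hx
  simp only [Set.mem_Ioo] at hx
  have h1 : (1:ℝ) ≤ 1 + x := by linarith [hx.1]
  have hs : (0:ℝ) ≤ Real.sqrt (S x) := Real.sqrt_nonneg _
  have hr2 : (0:ℝ) < Real.sqrt 2 := by positivity
  unfold S
  rw [div_mul_eq_mul_div, one_mul, div_mul_eq_mul_div]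
  gcongr
  nlinarith [Real.sqrt_nonneg (Real.log ((1 + x) / (1 - x)) / (2 * x)), hx.1]

lemma zeta_tendsto_half : Tendsto zeta (𝓝[<] (1:ℝ)) (𝓝 (1/2)) := by
  have hA : Tendsto (fun ε : ℝ => erf (-(1 - ε) / Real.sqrt 2 *
      Real.sqrt (Real.log ((1 + ε) / (1 - ε)) / (2 * ε)))) (𝓝[<] (1:ℝ)) (𝓝 0) := by
    have := (erf_continuous.tendsto 0).comp A_tendsto
    rwa [erf_zero] at this
  have hB : Tendsto (fun ε : ℝ => erf ((1 + ε) / Real.sqrt 2 *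
      Real.sqrt (Real.log ((1 + ε) / (1 - ε)) / (2 * ε)))) (𝓝[<] (1:ℝ)) (𝓝 1) :=
    erf_tendsto_one.comp B_tendsto
  have h := (hA.add hB).const_mul (1/2 : ℝ)
  have hv : (1/2 : ℝ) * (0 + 1) = 1/2 := by norm_num
  rw [hv] at h
  exact h

theorem zeta_convex_and_limits :
    ConvexOn ℝ (Set.Ioo (0 : ℝ) 1) zeta ∧
    Tendsto zeta (𝓝[>] (0 : ℝ)) (𝓝 0) ∧
    Tendsto zeta (𝓝[<] (1 : ℝ)) (𝓝 (1 / 2)) :=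
  ⟨zeta_convex, zeta_tendsto_zero, zeta_tendsto_half⟩
end

section
/- Let Q = [[q11, q12^T], [q12, Q22]] be an (n+1)×(n+1) real symmetric positive semidefinite matrix in block form and let γ > 0. Then for all x ∈ R^n, q11 + γ + 2 q12^T x + x^T Q22 x ≥ ( (q11+γ)^{1/2} + (q11+γ)^{-1/2} q12^T x )². -/
open Matrix

theorem complete_square_lower_bound
    {n : ℕ} (Q : Matrix (Fin (n + 1)) (Fin (n + 1)) ℝ) (hQ : Q.PosSemidef)
    (γ : ℝ) (hγ : 0 < γ) (x : Fin n → ℝ) :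
    ((Q 0 0 + γ) ^ ((1 : ℝ) / 2) +
        (Q 0 0 + γ) ^ (-(1 : ℝ) / 2) * ((fun i => Q (Fin.succ i) 0) ⬝ᵥ x)) ^ 2
      ≤ Q 0 0 + γ + 2 * ((fun i => Q (Fin.succ i) 0) ⬝ᵥ x) +
          x ⬝ᵥ (Q.submatrix Fin.succ Fin.succ) *ᵥ x := by
  set b : ℝ := (fun i => Q (Fin.succ i) 0) ⬝ᵥ x with hb
  set c : ℝ := x ⬝ᵥ (Q.submatrix Fin.succ Fin.succ) *ᵥ x with hc
  -- Q 0 0 ≥ 0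
  have hQ00 : 0 ≤ Q 0 0 := by
    have := hQ.re_dotProduct_nonneg (Pi.single 0 1)
    simpa [dotProduct, mulVec, Pi.single_apply] using this
  have ha : 0 < Q 0 0 + γ := by linarith
  -- c ≥ 0
  have hcnn : 0 ≤ c := by
    have := (hQ.submatrix Fin.succ).re_dotProduct_nonneg x
    simpa [hc] using this
  -- quadratic nonneg in t
  have hquad : ∀ t : ℝ, 0 ≤ Q 0 0 * (t * t) + (2 * b) * t + c := by
    intro t
    have h := hQ.re_dotProduct_nonneg (Fin.cons t x)
    have hsym : ∀ j, Q 0 (Fin.succ j) = Q (Fin.succ j) 0 := by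
      intro j
      have := congrFun (congrFun hQ.1.eq (Fin.succ j)) 0
      simpa [conjTranspose_apply] using this
    have hexp : (Fin.cons t x : Fin (n+1) → ℝ) ⬝ᵥ Q *ᵥ (Fin.cons t x)
        = Q 0 0 * (t * t) + (2 * b) * t + c := by
      simp only [dotProduct, mulVec, Fin.sum_univ_succ, Fin.cons_zero, Fin.cons_succ,
        hb, hc, submatrix_apply, hsym, mul_add, add_mul, Finset.mul_sum, Finset.sum_mul,
        Finset.sum_add_distrib, two_mul, mul_comm, mul_left_comm, mul_assoc]
      ring_nf
    rw [← hexp]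
    simpa using h
  have hdisc := discrim_le_zero hquad
  rw [discrim] at hdisc
  -- b^2 ≤ Q 0 0 * c
  have hbc : b ^ 2 ≤ (Q 0 0 + γ) * c := by
    nlinarith
  have hr1 : ((Q 0 0 + γ) ^ ((1:ℝ)/2)) ^ 2 = Q 0 0 + γ := by
    rw [← Real.rpow_natCast ((Q 0 0 + γ) ^ ((1:ℝ)/2)) 2, ← Real.rpow_mul ha.le]
    norm_num
  have hr2 : (Q 0 0 + γ) ^ (-(1:ℝ)/2) = ((Q 0 0 + γ) ^ ((1:ℝ)/2))⁻¹ := by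
    rw [← Real.rpow_neg ha.le]
    norm_num
  have hs : 0 < (Q 0 0 + γ) ^ ((1:ℝ)/2) := Real.rpow_pos_of_pos ha _
  rw [hr2]
  set s := (Q 0 0 + γ) ^ ((1:ℝ)/2) with hsdef
  rw [← hr1]
  have key : (s + s⁻¹ * b) ^ 2 = s ^ 2 + 2 * b + b ^ 2 / s ^ 2 := by
    field_simp
    ring
  rw [key]
  have : b ^ 2 / s ^ 2 ≤ c := by
    rw [div_le_iff₀ (by positivity)]
    nlinarith
  linarith
end
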